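/- Define v(n) = max {k < n : ∀ j, w, z < k, if j codes a proof (in a fixed sound, recursively axiomatized theory) that {w} is total, then {w}(z) halts in fewer than n steps with output less than n} (max of the empty set being 0). Then v : ℕ → ℕ is total computable, and the range of v is unbounded: for every k there exists n with v(n) ≥ k. -/

import Mathlib

open Nat.Partrec

/-- `{w}(z)` halts in fewer than `n` steps with output less than `n`
(using `evaln` with fuel `n`; `getD n` is `< n` exactly when the computation
converges within the fuel with output `< n`). -/
def HaltsFastBelow (n w z : ℕ) : Prop :=
  (Nat.Partrec.Code.evaln n (Denumerable.ofNat Nat.Partrec.Code w) z).getD n < n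

instance (n w z : ℕ) : Decidable (HaltsFastBelow n w z) := by
  unfold HaltsFastBelow; infer_instance

/-- Beeson's function `v`, relative to a proof predicate `Pr` (where `Pr j w` says `j`
codes a proof that `{w}` is total):
`v n = max {k < n : ∀ j, w, z < k, Pr j w → {w}(z) halts in < n steps with output < n}`. -/
def beesonV (Pr : ℕ → ℕ → Bool) (n : ℕ) : ℕ :=
  ((Finset.range n).filter fun k =>
    ∀ j < k, ∀ w < k, ∀ z < k, Pr j w = true → HaltsFastBelow n w z).sup id

section Aux

open Nat.Partrec.Code Computable

/-- Bounded "for all" as a boolean, via `Nat.rec`. -/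
def ballB (p : ℕ → Bool) (n : ℕ) : Bool :=
  Nat.rec true (fun j acc => bif acc then p j else false) n

lemma ballB_eq_true (p : ℕ → Bool) (n : ℕ) :
    ballB p n = true ↔ ∀ j < n, p j = true := by
  induction n with
  | zero => simp [ballB]
  | succ n ih =>
      show (bif ballB p n then p n else false) = true ↔ _
      rw [show (bif ballB p n then p n else false) = (ballB p n && p n) from by
        cases ballB p n <;> rfl, Bool.and_eq_true, ih]
      constructor
      · rintro ⟨h1, h2⟩ j hj
        rcases Nat.lt_succ_iff_lt_or_eq.1 hj with h | h
        · exact h1 j h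
        · exact h ▸ h2
      · intro h
        exact ⟨fun j hj => h j (hj.trans (Nat.lt_succ_self _)), h n (Nat.lt_succ_self _)⟩

lemma ballB_computable {α : Type*} [Primcodable α] {p : α → ℕ → Bool} {f : α → ℕ}
    (hp : Computable₂ p) (hf : Computable f) :
    Computable fun a => ballB (p a) (f a) :=
  Computable.nat_rec hf (Computable.const true)
    ((Computable.cond (snd.comp snd) (hp.comp fst (fst.comp snd))
      (Computable.const false)).to₂)

lemma hfb_primrec :
    Primrec fun y : (ℕ × ℕ) × ℕ => decide (HaltsFastBelow y.1.1 y.1.2 y.2) := by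
  have h1 : Primrec fun y : (ℕ × ℕ) × ℕ =>
      (Nat.Partrec.Code.evaln y.1.1 (Denumerable.ofNat Nat.Partrec.Code y.1.2) y.2).getD y.1.1 :=
    Primrec.option_getD.comp
      (Nat.Partrec.Code.primrec_evaln.comp
        (Primrec.pair (Primrec.pair (Primrec.fst.comp Primrec.fst)
          ((Primrec.ofNat _).comp (Primrec.snd.comp Primrec.fst))) Primrec.snd))
      (Primrec.fst.comp Primrec.fst)
  exact (Primrec.nat_lt.comp h1 (Primrec.fst.comp Primrec.fst)).decide

/-- The boolean version of the condition defining `beesonV`. -/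
def beesonQ (Pr : ℕ → ℕ → Bool) (x : ℕ × ℕ) : Bool :=
  ballB (fun j =>
    ballB (fun w =>
      cond (Pr j w)
        (ballB (fun z => decide (HaltsFastBelow x.1 w z)) x.2)
        true) x.2) x.2

lemma beesonQ_eq_true (Pr : ℕ → ℕ → Bool) (n k : ℕ) :
    beesonQ Pr (n, k) = true ↔
      ∀ j < k, ∀ w < k, ∀ z < k, Pr j w = true → HaltsFastBelow n w z := by
  unfold beesonQ
  rw [ballB_eq_true]
  refine forall₂_congr fun j _ => ?_
  rw [ballB_eq_true]
  refine forall₂_congr fun w _ => ?_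
  cases h : Pr j w <;> simp [h, ballB_eq_true]

lemma beesonQ_computable (Pr : ℕ → ℕ → Bool)
    (hcomp : Computable fun p : ℕ × ℕ => Pr p.1 p.2) :
    Computable (beesonQ Pr) := by
  -- innermost: for x : ((ℕ×ℕ)×ℕ×ℕ) = ((n,k),(j,w)), ballB (fun z => ...) k
  have c3 : Computable fun x : (ℕ × ℕ) × ℕ × ℕ =>
      ballB (fun z => decide (HaltsFastBelow x.1.1 x.2.2 z)) x.1.2 :=
    ballB_computable
      ((hfb_primrec.to_comp.comp
        (Computable.pair (Computable.pair (fst.comp (fst.comp fst))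
          (snd.comp (snd.comp fst))) snd)).to₂)
      (snd.comp fst)
  have c3' : Computable fun x : (ℕ × ℕ) × ℕ × ℕ =>
      cond (Pr x.2.1 x.2.2)
        (ballB (fun z => decide (HaltsFastBelow x.1.1 x.2.2 z)) x.1.2) true :=
    Computable.cond (hcomp.comp snd) c3 (Computable.const true)
  have c2 : Computable fun y : (ℕ × ℕ) × ℕ =>
      ballB (fun w =>
        cond (Pr y.2 w)
          (ballB (fun z => decide (HaltsFastBelow y.1.1 w z)) y.1.2) true) y.1.2 :=
    ballB_computable
      ((c3'.comp (Computable.pair (fst.comp fst)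
        (Computable.pair (snd.comp fst) snd))).to₂)
      (snd.comp fst)
  exact ballB_computable ((c2.comp (Computable.pair fst snd)).to₂) snd

lemma beesonV_eq_rec (Pr : ℕ → ℕ → Bool) (n : ℕ) :
    beesonV Pr n =
      Nat.rec (motive := fun _ => ℕ) 0
        (fun k acc => cond (beesonQ Pr (n, k)) (max acc k) acc) n := by
  have key : ∀ m : ℕ,
      ((Finset.range m).filter fun k =>
        ∀ j < k, ∀ w < k, ∀ z < k, Pr j w = true → HaltsFastBelow n w z).sup id =
      Nat.rec (motive := fun _ => ℕ) 0
        (fun k acc => cond (beesonQ Pr (n, k)) (max acc k) acc) m := by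
    intro m
    induction m with
    | zero => simp
    | succ m ih =>
        rw [Finset.range_add_one, Finset.filter_insert]
        by_cases h : ∀ j < m, ∀ w < m, ∀ z < m, Pr j w = true → HaltsFastBelow n w z
        · rw [if_pos h, Finset.sup_insert, ih]
          have : beesonQ Pr (n, m) = true := (beesonQ_eq_true Pr n m).2 h
          simp [this, max_comm]
        · rw [if_neg h, ih]
          have : beesonQ Pr (n, m) = false :=
            Bool.eq_false_iff.2 fun ht => h ((beesonQ_eq_true Pr n m).1 ht)
          simp [this]
  exact key n

end Aux

/-- If `Pr` is a sound computable proof predicate for totality, then `v` is (total)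
computable and its range is unbounded. -/
theorem beesonV_computable_and_unbounded (Pr : ℕ → ℕ → Bool)
    (hcomp : Computable fun p : ℕ × ℕ => Pr p.1 p.2)
    (hsound : ∀ j w, Pr j w = true →
      ∀ z, ((Denumerable.ofNat Nat.Partrec.Code w).eval z).Dom) :
    Computable (beesonV Pr) ∧ ∀ k, ∃ n, k ≤ beesonV Pr n := by
  constructor
  · have cQ := beesonQ_computable Pr hcomp
    have : Computable fun n : ℕ =>
        Nat.rec (motive := fun _ => ℕ) 0
          (fun k acc => cond (beesonQ Pr (n, k)) (max acc k) acc) n := by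
      refine Computable.nat_rec
        (h := fun n p => cond (beesonQ Pr (n, p.1)) (max p.2 p.1) p.2)
        Computable.id (Computable.const 0) ?_
      refine (Computable.cond
        (cQ.comp (Computable.pair Computable.fst (Computable.fst.comp Computable.snd)))
        (Primrec.nat_max.to_comp.comp
          (Computable.snd.comp Computable.snd) (Computable.fst.comp Computable.snd))
        (Computable.snd.comp Computable.snd)).to₂
    exact this.of_eq fun n => (beesonV_eq_rec Pr n).symm
  · intro k
    -- for each (w,z) with eval dom, find a uniform fuel bound
    have key : ∀ w z : ℕ, ((Denumerable.ofNat Nat.Partrec.Code w).eval z).Dom →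
        ∃ m, ∀ m' ≥ m, HaltsFastBelow m' w z := by
      intro w z h
      obtain ⟨x, hx⟩ := Part.dom_iff_mem.1 h
      obtain ⟨f, hf⟩ := Nat.Partrec.Code.evaln_complete.1 hx
      refine ⟨max f (x + 1), fun m' hm' => ?_⟩
      have hmem := Nat.Partrec.Code.evaln_mono (le_trans (le_max_left _ _) hm') hf
      rw [Option.mem_def] at hmem
      unfold HaltsFastBelow
      rw [hmem]
      simp only [Option.getD_some]
      have : x + 1 ≤ m' := le_trans (le_max_right _ _) hm'
      omega
    classical
    set g : ℕ × ℕ → ℕ := fun p =>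
      if h : ((Denumerable.ofNat Nat.Partrec.Code p.1).eval p.2).Dom then
        (key p.1 p.2 h).choose else 0 with hg
    set N : ℕ := (k + 1) + ((Finset.range k ×ˢ Finset.range k).sup g) with hN
    refine ⟨N, ?_⟩
    have hkN : k < N := by omega
    have hmem : k ∈ (Finset.range N).filter fun k' =>
        ∀ j < k', ∀ w < k', ∀ z < k', Pr j w = true → HaltsFastBelow N w z := by
      rw [Finset.mem_filter]
      refine ⟨Finset.mem_range.2 hkN, fun j hj w hw z hz hPr => ?_⟩
      have hdom := hsound j w hPr z
      have hmemp : (w, z) ∈ Finset.range k ×ˢ Finset.range k :=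
        Finset.mem_product.2 ⟨Finset.mem_range.2 hw, Finset.mem_range.2 hz⟩
      have hgle : g (w, z) ≤ N :=
        le_trans (Finset.le_sup hmemp) (by omega)
      have : g (w, z) = (key w z hdom).choose := by simp [hg, hdom]
      exact (key w z hdom).choose_spec N (this ▸ hgle)
    calc k = id k := rfl
      _ ≤ _ := Finset.le_sup hmem
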